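/- arXiv:2101.11140 — 2 statements merged into one kernel-verified Lean document; each statement's English description precedes it below -/
import Mathlib

section
/- Let m ≥ 3, let A be a semi-symmetric strong M-tensor of order m and dimension n, let b ∈ ℝⁿ with b ≥ 0, I₊ = {i : b_i > 0} nonempty, I₀ = {i : b_i = 0} nonempty, and suppose for every i ∈ I₀ there exist indices i₂,…,i_m ∈ I₊ with a_{i i₂…i_m} ≠ 0. Let 0 < ε′ < ε < 1. Then for every y ∈ F̄_{ε,ε′}, the Schur complement f'(y)_{I₀I₀} − f'(y)_{I₀I₊} f'(y)_{I₊I₊}^{−1} f'(y)_{I₊I₀} is a nonsingular M-matrix. -/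
open Finset Matrix Filter Topology

noncomputable section

/-- `(A x^{m-1})_i`: action of an `m`th-order `n`-dimensional tensor, stored with its first
index separated and `q = m-1` trailing indices:
`(A x^{m-1})_i = ∑_{i₂,…,i_m} a_{i i₂…i_m} x_{i₂}⋯x_{i_m}`. -/
def tApp {n q : ℕ} (A : Fin n → (Fin q → Fin n) → ℝ) (x : Fin n → ℝ) (i : Fin n) : ℝ :=
  ∑ g : Fin q → Fin n, A i g * ∏ j, x (g j)

/-- Complex version of `tApp` (for eigenvalues). -/
def tAppC {n q : ℕ} (A : Fin n → (Fin q → Fin n) → ℝ) (x : Fin n → ℂ) (i : Fin n) : ℂ :=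
  ∑ g : Fin q → Fin n, (A i g : ℂ) * ∏ j, x (g j)

/-- The identity tensor: entry `1` when all indices coincide, `0` otherwise. -/
def identT (n q : ℕ) : Fin n → (Fin q → Fin n) → ℝ :=
  fun i g => if ∀ j, g j = i then 1 else 0

/-- `lam ∈ ℂ` is an eigenvalue of the tensor `B`: there is a nonzero `x ∈ ℂⁿ` with
`(B x^{m-1})_i = lam * x_i^{m-1}` for all `i`. -/
def IsTensorEigenvalue {n q : ℕ} (B : Fin n → (Fin q → Fin n) → ℝ) (lam : ℂ) : Prop :=
  ∃ x : Fin n → ℂ, x ≠ 0 ∧ ∀ i, tAppC B x i = lam * x i ^ q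

/-- Semi-symmetry: the entries `a_{i i₂…i_m}` are invariant under permutations of `i₂,…,i_m`. -/
def IsSemiSymmetric {n q : ℕ} (A : Fin n → (Fin q → Fin n) → ℝ) : Prop :=
  ∀ (i : Fin n) (g : Fin q → Fin n) (σ : Equiv.Perm (Fin q)), A i (g ∘ σ) = A i g

/-- Z-tensor: all off-diagonal entries are nonpositive. -/
def IsZTensor {n q : ℕ} (A : Fin n → (Fin q → Fin n) → ℝ) : Prop :=
  ∀ (i : Fin n) (g : Fin q → Fin n), ¬(∀ j, g j = i) → A i g ≤ 0

/-- Strong (nonsingular) M-tensor: `A = s·I − B` with `B ≥ 0` and `s > ρ(B)`,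
i.e. `|λ| < s` for every eigenvalue `λ` of `B`. -/
def IsStrongMTensor {n q : ℕ} (A : Fin n → (Fin q → Fin n) → ℝ) : Prop :=
  ∃ (s : ℝ) (B : Fin n → (Fin q → Fin n) → ℝ),
    (∀ i g, 0 ≤ B i g) ∧ (∀ i g, A i g = s * identT n q i g - B i g) ∧
    ∀ lam : ℂ, IsTensorEigenvalue B lam → ‖lam‖ < s

/-- Componentwise power `y^{[α]}`. -/
def cPow {n : ℕ} (y : Fin n → ℝ) (α : ℝ) : Fin n → ℝ := fun i => y i ^ α

/-- Euclidean norm on `Fin n → ℝ`. -/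
def enorm2 {n : ℕ} (x : Fin n → ℝ) : ℝ := Real.sqrt (∑ i, x i ^ 2)

/-- The Jacobian matrix of a map `f : ℝⁿ → ℝⁿ` at `y`. -/
def jacM {n : ℕ} (f : (Fin n → ℝ) → Fin n → ℝ) (y : Fin n → ℝ) :
    Matrix (Fin n) (Fin n) ℝ :=
  fun i j => fderiv ℝ (fun z => f z i) y (Pi.single j 1)

/-- `f(y) = A (y^{[1/(m-1)]})^{m-1} − b`, with `q = m−1`. -/
def fres {n q : ℕ} (A : Fin n → (Fin q → Fin n) → ℝ) (b : Fin n → ℝ)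
    (y : Fin n → ℝ) : Fin n → ℝ :=
  fun i => tApp A (cPow y (1 / (q : ℝ))) i - b i

/-- Nonsingular M-matrix: nonpositive off-diagonal entries and `M = s·1 − N` with
`N ≥ 0` entrywise and `s` larger than the spectral radius of `N`. -/
def IsNonsingularMMatrix {k : Type} [Fintype k] [DecidableEq k] (M : Matrix k k ℝ) : Prop :=
  (∀ i j, i ≠ j → M i j ≤ 0) ∧
  ∃ (s : ℝ) (N : Matrix k k ℝ), (∀ i j, 0 ≤ N i j) ∧
    M = s • (1 : Matrix k k ℝ) - N ∧
    ∀ μ ∈ spectrum ℂ (N.map (fun t : ℝ => (t : ℂ))), ‖μ‖ < s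

/-- The feasible set `F_ε = {y > 0 : A (y^{[1/(m-1)]})^{m-1} ≥ ε b}`. -/
def FSet {n q : ℕ} (A : Fin n → (Fin q → Fin n) → ℝ) (b : Fin n → ℝ) (ε : ℝ) :
    Set (Fin n → ℝ) :=
  {y | (∀ i, 0 < y i) ∧ ∀ i, ε * b i ≤ tApp A (cPow y (1 / (q : ℝ))) i}

/-- Acceptance of the trial steplength `t` in the line search: feasibility and
`‖f(y + t d)‖² ≤ (1 − 2σt)‖f(y)‖²`. -/
def StepOK {n q : ℕ} (A : Fin n → (Fin q → Fin n) → ℝ) (b : Fin n → ℝ)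
    (Fb : Set (Fin n → ℝ)) (σ : ℝ) (y d : Fin n → ℝ) (t : ℝ) : Prop :=
  y + t • d ∈ Fb ∧
    enorm2 (fres A b (y + t • d)) ^ 2 ≤ (1 - 2 * σ * t) * enorm2 (fres A b y) ^ 2

/-- Newton's method (Algorithm 2.4 resp. 3.4) with feasible set `Fb`, never terminating:
`y₀ ∈ Fb`; for every `k`, `f(y_k) ≠ 0`, `d_k` is the unique solution of
`f'(y_k) d = −f(y_k)`, `α_k = ρ^{i_k}` with `i_k` the least acceptable exponent, and
`y_{k+1} = y_k + α_k d_k`. -/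
def NewtonIter {n q : ℕ} (A : Fin n → (Fin q → Fin n) → ℝ) (b : Fin n → ℝ)
    (Fb : Set (Fin n → ℝ)) (σ ρ : ℝ) (y d : ℕ → Fin n → ℝ) (α : ℕ → ℝ) : Prop :=
  y 0 ∈ Fb ∧ ∀ k : ℕ,
    fres A b (y k) ≠ 0 ∧
    jacM (fres A b) (y k) *ᵥ d k = -fres A b (y k) ∧
    (∀ d', jacM (fres A b) (y k) *ᵥ d' = -fres A b (y k) → d' = d k) ∧
    (∃ ik : ℕ, α k = ρ ^ ik ∧ StepOK A b Fb σ (y k) (d k) (ρ ^ ik) ∧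
      ∀ i < ik, ¬StepOK A b Fb σ (y k) (d k) (ρ ^ i)) ∧
    y (k + 1) = y k + α k • d k

/-- Submatrix of `M` with rows indexed by `{i // P i}` and columns by `{i // Q i}`. -/
def subMat {n : ℕ} (M : Matrix (Fin n) (Fin n) ℝ) (P Q : Fin n → Prop) :
    Matrix {i // P i} {i // Q i} ℝ :=
  fun i j => M i.1 j.1

/-- `b` restricted to the index set `I₊ = {i : b_i > 0}`. -/
def bPlus {n : ℕ} (b : Fin n → ℝ) : {i : Fin n // 0 < b i} → ℝ := fun i => b i.1

/-- `F̄¹_ε = {y > 0 : (A(y^{[1/(m−1)]})^{m−1})_i ≥ ε b_i for all i ∈ I₊}`. -/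
def FBar1 {n q : ℕ} (A : Fin n → (Fin q → Fin n) → ℝ) (b : Fin n → ℝ) (ε : ℝ) :
    Set (Fin n → ℝ) :=
  {y | (∀ i, 0 < y i) ∧ ∀ i, 0 < b i → ε * b i ≤ tApp A (cPow y (1 / (q : ℝ))) i}

/-- `F̄²_{ε'} = {y > 0 : f'(y)_{I₊I₊} invertible and
`(A(y^{[1/(m−1)]})^{m−1})_{I₀} ≥ ε' f'(y)_{I₀I₊} f'(y)_{I₊I₊}⁻¹ b_{I₊}` componentwise}. -/
def FBar2 {n q : ℕ} (A : Fin n → (Fin q → Fin n) → ℝ) (b : Fin n → ℝ) (ε' : ℝ) :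
    Set (Fin n → ℝ) :=
  {y | (∀ i, 0 < y i) ∧
    IsUnit (subMat (jacM (fres A b) y) (fun i => 0 < b i) (fun i => 0 < b i)) ∧
    ∀ i : {i : Fin n // b i = 0},
      ε' * (subMat (jacM (fres A b) y) (fun i => b i = 0) (fun i => 0 < b i) *ᵥ
        ((subMat (jacM (fres A b) y) (fun i => 0 < b i) (fun i => 0 < b i))⁻¹ *ᵥ bPlus b)) i
        ≤ tApp A (cPow y (1 / (q : ℝ))) i.1}

/-- `F̄_{ε,ε'} = F̄¹_ε ∩ F̄²_{ε'}`. -/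
def FBar {n q : ℕ} (A : Fin n → (Fin q → Fin n) → ℝ) (b : Fin n → ℝ) (ε ε' : ℝ) :
    Set (Fin n → ℝ) :=
  FBar1 A b ε ∩ FBar2 A b ε'

/-- For every `i ∈ I₀` there exist indices `i₂,…,i_m ∈ I₊` with `a_{i i₂…i_m} ≠ 0`. -/
def I0Hyp {n q : ℕ} (A : Fin n → (Fin q → Fin n) → ℝ) (b : Fin n → ℝ) : Prop :=
  ∀ i : Fin n, b i = 0 → ∃ g : Fin q → Fin n, (∀ j, 0 < b (g j)) ∧ A i g ≠ 0


def Jent {n q : ℕ} (A : Fin n → (Fin q → Fin n) → ℝ) (y : Fin n → ℝ) (i k : Fin n) : ℝ :=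
  ∑ g : Fin q → Fin n, A i g *
    ∑ j : Fin q, (∏ l ∈ Finset.univ.erase j, y (g l) ^ (1/(q:ℝ))) *
      ((1/(q:ℝ)) * y (g j) ^ ((1/(q:ℝ)) - 1) * (if g j = k then 1 else 0))

lemma jacM_fres_eq {n q : ℕ} (A : Fin n → (Fin q → Fin n) → ℝ) (b : Fin n → ℝ)
    (y : Fin n → ℝ) (hy : ∀ i, 0 < y i) (i k : Fin n) :
    jacM (fres A b) y i k = Jent A y i k := by
  set α : ℝ := 1/(q:ℝ) with hα
  have base : ∀ u : Fin n, HasFDerivAt (fun z : Fin n → ℝ => z u ^ α)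
      ((α * y u ^ (α - 1)) • (ContinuousLinearMap.proj u : (Fin n → ℝ) →L[ℝ] ℝ)) y := by
    intro u
    have h1 : HasDerivAt (fun t : ℝ => t ^ α) (α * y u ^ (α - 1)) (y u) :=
      Real.hasDerivAt_rpow_const (Or.inl (hy u).ne')
    have h2 : HasFDerivAt (fun z : Fin n → ℝ => z u)
        (ContinuousLinearMap.proj u : (Fin n → ℝ) →L[ℝ] ℝ) y :=
      (ContinuousLinearMap.proj u : (Fin n → ℝ) →L[ℝ] ℝ).hasFDerivAt
    exact h1.comp_hasFDerivAt y h2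
  have hprod : ∀ g : Fin q → Fin n, HasFDerivAt
      (fun z : Fin n → ℝ => ∏ j : Fin q, z (g j) ^ α)
      (∑ j : Fin q, (∏ l ∈ Finset.univ.erase j, y (g l) ^ α) •
        ((α * y (g j) ^ (α - 1)) • (ContinuousLinearMap.proj (g j) : (Fin n → ℝ) →L[ℝ] ℝ))) y :=
    fun g => HasFDerivAt.finset_prod (fun j _ => base (g j))
  have hmain : HasFDerivAt (fun z : Fin n → ℝ => fres A b z i)
      (∑ g : Fin q → Fin n, A i g •
        (∑ j : Fin q, (∏ l ∈ Finset.univ.erase j, y (g l) ^ α) •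
          ((α * y (g j) ^ (α - 1)) • (ContinuousLinearMap.proj (g j) : (Fin n → ℝ) →L[ℝ] ℝ)))) y := by
    have : HasFDerivAt (fun z : Fin n → ℝ => ∑ g : Fin q → Fin n, A i g * ∏ j : Fin q, z (g j) ^ α)
        (∑ g : Fin q → Fin n, A i g •
          (∑ j : Fin q, (∏ l ∈ Finset.univ.erase j, y (g l) ^ α) •
            ((α * y (g j) ^ (α - 1)) • (ContinuousLinearMap.proj (g j) : (Fin n → ℝ) →L[ℝ] ℝ)))) y := by
      refine HasFDerivAt.fun_sum (fun g _ => ?_)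
      simpa using (hprod g).const_mul (A i g)
    exact (this.sub_const (b i)).congr_of_eventuallyEq
      (by filter_upwards with z; simp [fres, tApp, cPow, hα, one_div])
  have := hmain.fderiv
  simp only [jacM, this]
  simp [Jent, ContinuousLinearMap.sum_apply, ContinuousLinearMap.smul_apply,
    ContinuousLinearMap.proj_apply, Pi.single_apply, smul_eq_mul, hα, one_div]

lemma jent_term_nonneg {n q : ℕ} (y : Fin n → ℝ) (hy : ∀ i, 0 < y i)
    (g : Fin q → Fin n) (k : Fin n) (j : Fin q) :
    0 ≤ (∏ l ∈ Finset.univ.erase j, y (g l) ^ (1/(q:ℝ))) *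
      ((1/(q:ℝ)) * y (g j) ^ ((1/(q:ℝ)) - 1) * (if g j = k then 1 else 0)) := by
  apply mul_nonneg
  · exact Finset.prod_nonneg fun l _ => Real.rpow_nonneg (hy (g l)).le _
  · apply mul_nonneg
    · exact mul_nonneg (by positivity) (Real.rpow_nonneg (hy (g j)).le _)
    · split <;> norm_num

lemma jent_g_nonpos {n q : ℕ} (A : Fin n → (Fin q → Fin n) → ℝ)
    (hzA : ∀ i g, ¬(∀ j, g j = i) → A i g ≤ 0) (y : Fin n → ℝ) (hy : ∀ i, 0 < y i)
    {i k : Fin n} (hik : i ≠ k) (g : Fin q → Fin n) :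
    A i g * ∑ j : Fin q, (∏ l ∈ Finset.univ.erase j, y (g l) ^ (1/(q:ℝ))) *
      ((1/(q:ℝ)) * y (g j) ^ ((1/(q:ℝ)) - 1) * (if g j = k then 1 else 0)) ≤ 0 := by
  by_cases hg : ∃ j, g j = k
  · obtain ⟨j, hj⟩ := hg
    have hA : A i g ≤ 0 := hzA i g fun h => hik ((h j).symm.trans hj)
    have hS : 0 ≤ ∑ j : Fin q, (∏ l ∈ Finset.univ.erase j, y (g l) ^ (1/(q:ℝ))) *
        ((1/(q:ℝ)) * y (g j) ^ ((1/(q:ℝ)) - 1) * (if g j = k then 1 else 0)) :=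
      Finset.sum_nonneg fun j _ => jent_term_nonneg y hy g k j
    exact mul_nonpos_iff.2 (Or.inr ⟨hA, hS⟩)
  · have : ∑ j : Fin q, (∏ l ∈ Finset.univ.erase j, y (g l) ^ (1/(q:ℝ))) *
        ((1/(q:ℝ)) * y (g j) ^ ((1/(q:ℝ)) - 1) * (if g j = k then 1 else 0)) = 0 :=
      Finset.sum_eq_zero fun j _ => by
        rw [if_neg fun h => hg ⟨j, h⟩]; ring
    rw [this, mul_zero]

lemma jent_nonpos {n q : ℕ} (A : Fin n → (Fin q → Fin n) → ℝ)
    (hzA : ∀ i g, ¬(∀ j, g j = i) → A i g ≤ 0) (y : Fin n → ℝ) (hy : ∀ i, 0 < y i)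
    {i k : Fin n} (hik : i ≠ k) : Jent A y i k ≤ 0 :=
  Finset.sum_nonpos fun g _ => jent_g_nonpos A hzA y hy hik g

lemma jent_neg {n q : ℕ} (hq : q ≠ 0) (A : Fin n → (Fin q → Fin n) → ℝ)
    (hzA : ∀ i g, ¬(∀ j, g j = i) → A i g ≤ 0) (y : Fin n → ℝ) (hy : ∀ i, 0 < y i)
    {i k : Fin n} (hik : i ≠ k) (g₀ : Fin q → Fin n) (j₀ : Fin q)
    (hA0 : A i g₀ < 0) (hk0 : g₀ j₀ = k) : Jent A y i k < 0 := by
  have hq' : (0:ℝ) < (q:ℝ) := by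
    exact_mod_cast Nat.pos_of_ne_zero hq
  have hterm : A i g₀ * ∑ j : Fin q, (∏ l ∈ Finset.univ.erase j, y (g₀ l) ^ (1/(q:ℝ))) *
      ((1/(q:ℝ)) * y (g₀ j) ^ ((1/(q:ℝ)) - 1) * (if g₀ j = k then 1 else 0)) < 0 := by
    apply mul_neg_of_neg_of_pos hA0
    have hj : (0:ℝ) < (∏ l ∈ Finset.univ.erase j₀, y (g₀ l) ^ (1/(q:ℝ))) *
        ((1/(q:ℝ)) * y (g₀ j₀) ^ ((1/(q:ℝ)) - 1) * (if g₀ j₀ = k then 1 else 0)) := by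
      rw [if_pos hk0]
      have h1 : (0:ℝ) < ∏ l ∈ Finset.univ.erase j₀, y (g₀ l) ^ (1/(q:ℝ)) :=
        Finset.prod_pos fun l _ => Real.rpow_pos_of_pos (hy (g₀ l)) _
      have h2 : (0:ℝ) < y (g₀ j₀) ^ ((1/(q:ℝ)) - 1) := Real.rpow_pos_of_pos (hy (g₀ j₀)) _
      have h3 : (0:ℝ) < 1/(q:ℝ) := by positivity
      rw [mul_one]
      exact mul_pos h1 (mul_pos h3 h2)
    calc (0:ℝ) < _ := hj
    _ ≤ _ := Finset.single_le_sum (fun j _ => jent_term_nonneg y hy g₀ k j) (Finset.mem_univ j₀)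
  have hle : ∀ g ∈ (Finset.univ : Finset (Fin q → Fin n)),
      A i g * ∑ j : Fin q, (∏ l ∈ Finset.univ.erase j, y (g l) ^ (1/(q:ℝ))) *
        ((1/(q:ℝ)) * y (g j) ^ ((1/(q:ℝ)) - 1) * (if g j = k then 1 else 0)) ≤ (0:ℝ) :=
    fun g _ => jent_g_nonpos A hzA y hy hik g
  have := Finset.sum_lt_sum hle ⟨g₀, Finset.mem_univ g₀, hterm⟩
  simpa [Jent] using this

lemma jent_euler {n q : ℕ} (hq : q ≠ 0) (A : Fin n → (Fin q → Fin n) → ℝ)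
    (y : Fin n → ℝ) (hy : ∀ i, 0 < y i) (i : Fin n) :
    ∑ k, Jent A y i k * y k = tApp A (cPow y (1/(q:ℝ))) i := by
  have hq' : (0:ℝ) < (q:ℝ) := by exact_mod_cast Nat.pos_of_ne_zero hq
  have key : ∀ g : Fin q → Fin n,
      ∑ k, (∑ j : Fin q, (∏ l ∈ Finset.univ.erase j, y (g l) ^ (1/(q:ℝ))) *
        ((1/(q:ℝ)) * y (g j) ^ ((1/(q:ℝ)) - 1) * (if g j = k then 1 else 0))) * y k
      = ∏ j : Fin q, (cPow y (1/(q:ℝ))) (g j) := by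
    intro g
    have step1 : ∀ j : Fin q,
        ∑ k, (∏ l ∈ Finset.univ.erase j, y (g l) ^ (1/(q:ℝ))) *
          ((1/(q:ℝ)) * y (g j) ^ ((1/(q:ℝ)) - 1) * (if g j = k then 1 else 0)) * y k
        = (1/(q:ℝ)) * ∏ l : Fin q, y (g l) ^ (1/(q:ℝ)) := by
      intro j
      have hsum : ∑ k, (∏ l ∈ Finset.univ.erase j, y (g l) ^ (1/(q:ℝ))) *
          ((1/(q:ℝ)) * y (g j) ^ ((1/(q:ℝ)) - 1) * (if g j = k then 1 else 0)) * y k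
          = (∏ l ∈ Finset.univ.erase j, y (g l) ^ (1/(q:ℝ))) *
            ((1/(q:ℝ)) * y (g j) ^ ((1/(q:ℝ)) - 1)) * y (g j) := by
        rw [Finset.sum_eq_single (g j)]
        · rw [if_pos rfl]; ring
        · intro k _ hk
          rw [if_neg (fun h => hk h.symm)]
          ring
        · intro h; exact absurd (Finset.mem_univ _) h
      rw [hsum]
      have hpow : y (g j) ^ ((1/(q:ℝ)) - 1) * y (g j) = y (g j) ^ (1/(q:ℝ)) := by
        rw [Real.rpow_sub (hy (g j)), Real.rpow_one,
          div_mul_cancel₀ _ (hy (g j)).ne']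
      have hprod : (∏ l ∈ Finset.univ.erase j, y (g l) ^ (1/(q:ℝ))) * y (g j) ^ (1/(q:ℝ))
          = ∏ l : Fin q, y (g l) ^ (1/(q:ℝ)) :=
        Finset.prod_erase_mul _ _ (Finset.mem_univ j)
      calc (∏ l ∈ Finset.univ.erase j, y (g l) ^ (1/(q:ℝ))) *
            ((1/(q:ℝ)) * y (g j) ^ ((1/(q:ℝ)) - 1)) * y (g j)
          = (1/(q:ℝ)) * ((∏ l ∈ Finset.univ.erase j, y (g l) ^ (1/(q:ℝ))) *
            (y (g j) ^ ((1/(q:ℝ)) - 1) * y (g j))) := by ring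
        _ = (1/(q:ℝ)) * ∏ l : Fin q, y (g l) ^ (1/(q:ℝ)) := by rw [hpow, hprod]
    calc ∑ k, (∑ j : Fin q, (∏ l ∈ Finset.univ.erase j, y (g l) ^ (1/(q:ℝ))) *
          ((1/(q:ℝ)) * y (g j) ^ ((1/(q:ℝ)) - 1) * (if g j = k then 1 else 0))) * y k
        = ∑ j : Fin q, ∑ k, (∏ l ∈ Finset.univ.erase j, y (g l) ^ (1/(q:ℝ))) *
          ((1/(q:ℝ)) * y (g j) ^ ((1/(q:ℝ)) - 1) * (if g j = k then 1 else 0)) * y k := by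
          rw [Finset.sum_comm]
          exact Finset.sum_congr rfl fun k _ => Finset.sum_mul _ _ _
      _ = ∑ j : Fin q, (1/(q:ℝ)) * ∏ l : Fin q, y (g l) ^ (1/(q:ℝ)) :=
          Finset.sum_congr rfl fun j _ => step1 j
      _ = (q:ℝ) * ((1/(q:ℝ)) * ∏ l : Fin q, y (g l) ^ (1/(q:ℝ))) := by
          rw [Finset.sum_const, Finset.card_univ, Fintype.card_fin, nsmul_eq_mul]
      _ = ∏ j : Fin q, (cPow y (1/(q:ℝ))) (g j) := by
          field_simp [cPow]
          rfl
  simp only [Jent]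
  calc ∑ k, (∑ g : Fin q → Fin n, A i g *
        ∑ j : Fin q, (∏ l ∈ Finset.univ.erase j, y (g l) ^ (1/(q:ℝ))) *
          ((1/(q:ℝ)) * y (g j) ^ ((1/(q:ℝ)) - 1) * (if g j = k then 1 else 0))) * y k
      = ∑ k, ∑ g : Fin q → Fin n, A i g *
        ((∑ j : Fin q, (∏ l ∈ Finset.univ.erase j, y (g l) ^ (1/(q:ℝ))) *
          ((1/(q:ℝ)) * y (g j) ^ ((1/(q:ℝ)) - 1) * (if g j = k then 1 else 0))) * y k) := by
        refine Finset.sum_congr rfl fun k _ => ?_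
        rw [Finset.sum_mul]
        exact Finset.sum_congr rfl fun g _ => mul_assoc _ _ _
    _ = ∑ g : Fin q → Fin n, ∑ k, A i g *
        ((∑ j : Fin q, (∏ l ∈ Finset.univ.erase j, y (g l) ^ (1/(q:ℝ))) *
          ((1/(q:ℝ)) * y (g j) ^ ((1/(q:ℝ)) - 1) * (if g j = k then 1 else 0))) * y k) :=
        Finset.sum_comm
    _ = ∑ g : Fin q → Fin n, A i g *
        ∑ k, (∑ j : Fin q, (∏ l ∈ Finset.univ.erase j, y (g l) ^ (1/(q:ℝ))) *
          ((1/(q:ℝ)) * y (g j) ^ ((1/(q:ℝ)) - 1) * (if g j = k then 1 else 0))) * y k :=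
        Finset.sum_congr rfl fun g _ => (Finset.mul_sum _ _ _).symm
    _ = tApp A (cPow y (1/(q:ℝ))) i := by
        rw [tApp]
        exact Finset.sum_congr rfl fun g _ => by rw [key g]

section MatrixLemmas
variable {K : Type} [Fintype K] [DecidableEq K]

lemma zmat_core (M : Matrix K K ℝ) (x : K → ℝ) (hx : ∀ i, 0 < x i)
    (hz : ∀ i j, i ≠ j → M i j ≤ 0) (z : K → ℝ) (i : K) :
    ∃ i₀ : K, (∀ j, z i₀ / x i₀ * x j ≤ z j) ∧
      (M *ᵥ z) i₀ ≤ z i₀ / x i₀ * (M *ᵥ x) i₀ := by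
  obtain ⟨i₀, _, hi₀⟩ := Finset.exists_mem_eq_inf' (⟨i, Finset.mem_univ i⟩ :
    (Finset.univ : Finset K).Nonempty) (fun j => z j / x j)
  have hmin : ∀ j, z i₀ / x i₀ * x j ≤ z j := by
    intro j
    have h1 : z i₀ / x i₀ ≤ z j / x j := hi₀ ▸ Finset.inf'_le _ (Finset.mem_univ j)
    exact (le_div_iff₀ (hx j)).mp h1
  refine ⟨i₀, hmin, ?_⟩
  have hdiag : z i₀ = z i₀ / x i₀ * x i₀ := (div_mul_cancel₀ _ (hx i₀).ne').symm
  calc (M *ᵥ z) i₀ = ∑ j, M i₀ j * z j := rfl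
    _ ≤ ∑ j, M i₀ j * (z i₀ / x i₀ * x j) := by
        refine Finset.sum_le_sum fun j _ => ?_
        rcases eq_or_ne j i₀ with rfl | hj
        · rw [← hdiag]
        · exact mul_le_mul_of_nonpos_left (hmin j) (hz i₀ j hj.symm)
    _ = z i₀ / x i₀ * (M *ᵥ x) i₀ := by
        rw [Matrix.mulVec, dotProduct, Finset.mul_sum]
        exact Finset.sum_congr rfl fun j _ => by ring

lemma zmat_nonneg_sol (M : Matrix K K ℝ) (x : K → ℝ) (hx : ∀ i, 0 < x i)
    (hz : ∀ i j, i ≠ j → M i j ≤ 0) (hMx : ∀ i, 0 < (M *ᵥ x) i)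
    (z : K → ℝ) (hz0 : ∀ i, 0 ≤ (M *ᵥ z) i) : ∀ i, 0 ≤ z i := by
  intro i
  obtain ⟨i₀, hmin, hub⟩ := zmat_core M x hx hz z i
  rcases le_or_gt 0 (z i₀ / x i₀) with ht | ht
  · have := hmin i
    nlinarith [hx i]
  · have h1 : (M *ᵥ z) i₀ < 0 := lt_of_le_of_lt hub (by nlinarith [hMx i₀])
    exact absurd (hz0 i₀) (not_le.mpr h1)

lemma zmat_pos_sol (M : Matrix K K ℝ) (x : K → ℝ) (hx : ∀ i, 0 < x i)
    (hz : ∀ i j, i ≠ j → M i j ≤ 0) (hMx : ∀ i, 0 < (M *ᵥ x) i)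
    (z : K → ℝ) (hz0 : ∀ i, 0 < (M *ᵥ z) i) : ∀ i, 0 < z i := by
  intro i
  obtain ⟨i₀, hmin, hub⟩ := zmat_core M x hx hz z i
  rcases lt_or_ge 0 (z i₀ / x i₀) with ht | ht
  · have := hmin i
    nlinarith [hx i]
  · have h1 : (M *ᵥ z) i₀ ≤ 0 := le_trans hub (by nlinarith [hMx i₀])
    exact absurd (hz0 i₀) (not_lt.mpr h1)

lemma zmat_isNonsingularM (M : Matrix K K ℝ) (x : K → ℝ) (hx : ∀ i, 0 < x i)
    (hz : ∀ i j, i ≠ j → M i j ≤ 0) (hMx : ∀ i, 0 < (M *ᵥ x) i) :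
    IsNonsingularMMatrix M := by
  refine ⟨hz, 1 + ∑ i, |M i i|, (1 + ∑ i, |M i i|) • (1 : Matrix K K ℝ) - M, ?_, by rw [sub_sub_cancel], ?_⟩
  · intro i j
    rcases eq_or_ne i j with rfl | hij
    · have h1 : |M i i| ≤ ∑ l, |M l l| :=
        Finset.single_le_sum (fun l _ => abs_nonneg (M l l)) (Finset.mem_univ i)
      have h2 : M i i ≤ |M i i| := le_abs_self _
      simp only [Matrix.sub_apply, Matrix.smul_apply, Matrix.one_apply_eq, smul_eq_mul, mul_one]
      linarith
    · simp only [Matrix.sub_apply, Matrix.smul_apply, Matrix.one_apply_ne hij, smul_eq_mul,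
        mul_zero, zero_sub, neg_nonneg]
      exact hz i j hij
  · intro μ hμ
    set s : ℝ := 1 + ∑ i, |M i i| with hs
    set N : Matrix K K ℝ := s • (1 : Matrix K K ℝ) - M with hN
    have hNnonneg : ∀ i j, 0 ≤ N i j := by
      intro i j
      rcases eq_or_ne i j with rfl | hij
      · have h1 : |M i i| ≤ ∑ l, |M l l| :=
          Finset.single_le_sum (fun l _ => abs_nonneg (M l l)) (Finset.mem_univ i)
        have h2 : M i i ≤ |M i i| := le_abs_self _
        simp only [hN, Matrix.sub_apply, Matrix.smul_apply, Matrix.one_apply_eq, smul_eq_mul,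
          mul_one, hs]
        linarith
      · simp only [hN, Matrix.sub_apply, Matrix.smul_apply, Matrix.one_apply_ne hij, smul_eq_mul,
          mul_zero, zero_sub, neg_nonneg]
        exact hz i j hij
    have hμ' : μ ∈ spectrum ℂ (Matrix.toLinAlgEquiv' (N.map (fun t : ℝ => (t : ℂ)))) := by
      rwa [AlgEquiv.spectrum_eq]
    have heig : Module.End.HasEigenvalue (Matrix.toLinAlgEquiv' (N.map (fun t : ℝ => (t : ℂ)))) μ :=
      Module.End.hasEigenvalue_iff_mem_spectrum.mpr hμ'
    obtain ⟨v, hv⟩ := heig.exists_hasEigenvector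
    have hveq : (N.map (fun t : ℝ => (t : ℂ))) *ᵥ v = μ • v := by
      have := hv.apply_eq_smul
      rwa [Matrix.toLinAlgEquiv'_apply] at this
    have hvne : v ≠ 0 := hv.2
    obtain ⟨i₁, hi₁⟩ := Function.ne_iff.mp hvne
    have hi₁' : v i₁ ≠ 0 := by simpa using hi₁
    have hne : (Finset.univ : Finset K).Nonempty := ⟨i₁, Finset.mem_univ i₁⟩
    obtain ⟨i₀, _, hi₀⟩ := Finset.exists_mem_eq_sup' hne (fun j => ‖v j‖ / x j)
    have hbound : ∀ j, ‖v j‖ * x i₀ ≤ ‖v i₀‖ * x j := by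
      intro j
      have h1 : ‖v j‖ / x j ≤ ‖v i₀‖ / x i₀ := by
        rw [← hi₀]
        exact Finset.le_sup' (fun j => ‖v j‖ / x j) (Finset.mem_univ j)
      exact (div_le_div_iff₀ (hx j) (hx i₀)).mp h1
    have hvi₀pos : 0 < ‖v i₀‖ := by
      have h2 : 0 < ‖v i₁‖ := norm_pos_iff.mpr hi₁'
      have h3 : 0 < ‖v i₀‖ * x i₁ :=
        lt_of_lt_of_le (mul_pos h2 (hx i₀)) (hbound i₁)
      nlinarith [hx i₁, norm_nonneg (v i₀)]
    have hrow : μ * v i₀ = ∑ j, ((N i₀ j : ℂ)) * v j := by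
      have := congrFun hveq i₀
      simp only [Matrix.mulVec, dotProduct, Matrix.map_apply, Pi.smul_apply,
        smul_eq_mul] at this
      exact this.symm
    have hNx : (N *ᵥ x) i₀ < s * x i₀ := by
      have h4 : (N *ᵥ x) i₀ = s * x i₀ - (M *ᵥ x) i₀ := by
        simp [hN, Matrix.sub_mulVec, Matrix.smul_mulVec, Matrix.one_mulVec]
      rw [h4]
      linarith [hMx i₀]
    have hchain : ‖μ‖ * (‖v i₀‖ * x i₀) <
        s * (‖v i₀‖ * x i₀) := by
      calc ‖μ‖ * (‖v i₀‖ * x i₀)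
          = ‖μ * v i₀‖ * x i₀ := by
            rw [norm_mul]; ring
        _ ≤ (∑ j, ‖(N i₀ j : ℂ) * v j‖) * x i₀ := by
            rw [hrow]
            exact mul_le_mul_of_nonneg_right (norm_sum_le _ _) (hx i₀).le
        _ = ∑ j, N i₀ j * (‖v j‖ * x i₀) := by
            rw [Finset.sum_mul]
            refine Finset.sum_congr rfl fun j _ => ?_
            rw [norm_mul, Complex.norm_real, Real.norm_of_nonneg (hNnonneg i₀ j)]
            ring
        _ ≤ ∑ j, N i₀ j * (‖v i₀‖ * x j) := by
            refine Finset.sum_le_sum fun j _ => ?_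
            exact mul_le_mul_of_nonneg_left (hbound j) (hNnonneg i₀ j)
        _ = ‖v i₀‖ * (N *ᵥ x) i₀ := by
            rw [Matrix.mulVec, dotProduct, Finset.mul_sum]
            exact Finset.sum_congr rfl fun j _ => by ring
        _ < ‖v i₀‖ * (s * x i₀) := (mul_lt_mul_iff_right₀ hvi₀pos).mpr hNx
        _ = s * (‖v i₀‖ * x i₀) := by ring
    exact lt_of_mul_lt_mul_right hchain (mul_pos hvi₀pos (hx i₀)).le

end MatrixLemmas

set_option maxHeartbeats 1600000 in
theorem schur_complement_nonsingular_M {m n : ℕ} (hm : 3 ≤ m)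
    (A : Fin n → (Fin (m - 1) → Fin n) → ℝ)
    (hsym : IsSemiSymmetric A) (hM : IsStrongMTensor A)
    (b : Fin n → ℝ) (hb : ∀ i, 0 ≤ b i) (hbp : ∃ i, 0 < b i) (hb0 : ∃ i, b i = 0)
    (hI0 : I0Hyp A b)
    (ε ε' : ℝ) (h1 : 0 < ε') (h2 : ε' < ε) (h3 : ε < 1) :
    ∀ y ∈ FBar A b ε ε',
      IsNonsingularMMatrix
        (subMat (jacM (fres A b) y) (fun i => b i = 0) (fun i => b i = 0) -
          subMat (jacM (fres A b) y) (fun i => b i = 0) (fun i => 0 < b i) *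
            (subMat (jacM (fres A b) y) (fun i => 0 < b i) (fun i => 0 < b i))⁻¹ *
            subMat (jacM (fres A b) y) (fun i => 0 < b i) (fun i => b i = 0)) := by
  intro y hy
  obtain ⟨⟨hypos, hFB1⟩, -, hUnit, hFB2⟩ := hy
  have hq : m - 1 ≠ 0 := by omega
  have hq0 : 0 < m - 1 := Nat.pos_of_ne_zero hq
  have hε : 0 < ε := lt_trans h1 h2
  have hzA : ∀ (i : Fin n) (g : Fin (m-1) → Fin n), ¬(∀ j, g j = i) → A i g ≤ 0 := by
    obtain ⟨s, B, hBpos, hAB, -⟩ := hM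
    intro i g hg
    rw [hAB, identT, if_neg hg]
    simpa using hBpos i g
  have hJ : ∀ i k, jacM (fres A b) y i k = Jent A y i k := jacM_fres_eq A b y hypos
  set Mq := jacM (fres A b) y with hMq
  set Mpp := subMat Mq (fun i => 0 < b i) (fun i => 0 < b i) with hMppdef
  set M0p := subMat Mq (fun i => b i = 0) (fun i => 0 < b i) with hM0pdef
  set Mp0 := subMat Mq (fun i => 0 < b i) (fun i => b i = 0) with hMp0def
  set M00 := subMat Mq (fun i => b i = 0) (fun i => b i = 0) with hM00def
  set yp : {i // 0 < b i} → ℝ := fun i => y i.1 with hypdef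
  set y0 : {i // b i = 0} → ℝ := fun i => y i.1 with hy0def
  set wP : {i // 0 < b i} → ℝ := fun i => tApp A (cPow y (1 / ((m - 1 : ℕ) : ℝ))) i.1 with hwPdef
  have hyppos : ∀ i, 0 < yp i := fun i => hypos i.1
  have hy0pos : ∀ i, 0 < y0 i := fun i => hypos i.1
  -- Euler identity, split over the two index sets
  have hEuler : ∀ i : Fin n, (∑ k : {x // 0 < b x}, Mq i k.1 * y k.1) +
      (∑ k : {x // b x = 0}, Mq i k.1 * y k.1) = tApp A (cPow y (1 / ((m - 1 : ℕ) : ℝ))) i := by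
    intro i
    have hsplit := Fintype.sum_subtype_add_sum_subtype (fun x => 0 < b x)
      (fun k => Mq i k * y k)
    have hswap : (∑ k : {x // b x = 0}, Mq i k.1 * y k.1)
        = ∑ k : {x // ¬ 0 < b x}, Mq i k.1 * y k.1 := by
      refine Fintype.sum_equiv (Equiv.subtypeEquivRight fun x => ?_) _ _ fun k => rfl
      constructor
      · intro h; simp [h]
      · intro h; exact le_antisymm (not_lt.mp h) (hb x)
    have htot : ∑ k, Mq i k * y k = tApp A (cPow y (1 / ((m - 1 : ℕ) : ℝ))) i := by
      rw [show (∑ k, Mq i k * y k) = ∑ k, Jent A y i k * y k from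
        Finset.sum_congr rfl fun k _ => by rw [hJ]]
      exact jent_euler hq A y hypos i
    rw [hswap]
    rw [hsplit, htot]
  have hEulerP : ∀ i : {x // 0 < b x}, (Mpp *ᵥ yp) i + (Mp0 *ᵥ y0) i = wP i := by
    intro i
    have := hEuler i.1
    simpa [Matrix.mulVec, dotProduct, hMppdef, hMp0def, subMat, hypdef, hy0def, hwPdef, one_div] using this
  have hEuler0 : ∀ i : {x // b x = 0},
      (M0p *ᵥ yp) i + (M00 *ᵥ y0) i = tApp A (cPow y (1 / ((m - 1 : ℕ) : ℝ))) i.1 := by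
    intro i
    have := hEuler i.1
    simpa [Matrix.mulVec, dotProduct, hM0pdef, hM00def, subMat, hypdef, hy0def, one_div] using this
  have hwPlb : ∀ i : {x // 0 < b x}, ε * b i.1 ≤ wP i := fun i => hFB1 i.1 i.2
  have hwPpos : ∀ i : {x // 0 < b x}, 0 < wP i :=
    fun i => lt_of_lt_of_le (mul_pos hε i.2) (hwPlb i)
  -- sign facts
  have hMp0neg : ∀ (i : {x // 0 < b x}) (k : {x // b x = 0}), Mp0 i k ≤ 0 := by
    intro i k
    have hik : i.1 ≠ k.1 := by
      intro h
      have h' := i.2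
      rw [h, k.2] at h'
      exact lt_irrefl 0 h'
    rw [hMp0def]
    show Mq i.1 k.1 ≤ 0
    rw [hJ]
    exact jent_nonpos A hzA y hypos hik
  have hM0pneg : ∀ (i : {x // b x = 0}) (k : {x // 0 < b x}), M0p i k ≤ 0 := by
    intro i k
    have hik : i.1 ≠ k.1 := by
      intro h
      have h' := k.2
      rw [← h, i.2] at h'
      exact lt_irrefl 0 h'
    rw [hM0pdef]
    show Mq i.1 k.1 ≤ 0
    rw [hJ]
    exact jent_nonpos A hzA y hypos hik
  have hM00neg : ∀ i j : {x // b x = 0}, i ≠ j → M00 i j ≤ 0 := by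
    intro i j hij
    rw [hM00def]
    show Mq i.1 j.1 ≤ 0
    rw [hJ]
    exact jent_nonpos A hzA y hypos fun h => hij (Subtype.ext h)
  have hMppZ : ∀ i j : {x // 0 < b x}, i ≠ j → Mpp i j ≤ 0 := by
    intro i j hij
    rw [hMppdef]
    show Mq i.1 j.1 ≤ 0
    rw [hJ]
    exact jent_nonpos A hzA y hypos fun h => hij (Subtype.ext h)
  have hMppX : ∀ i, 0 < (Mpp *ᵥ yp) i := by
    intro i
    have h5 : (Mp0 *ᵥ y0) i ≤ 0 := by
      have hrfl : (Mp0 *ᵥ y0) i = ∑ k, Mp0 i k * y0 k := rfl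
      rw [hrfl]
      exact Finset.sum_nonpos fun k _ =>
        mul_nonpos_of_nonpos_of_nonneg (hMp0neg i k) (hy0pos k).le
    have h6 := hEulerP i
    have h7 := hwPpos i
    linarith
  have hdet : IsUnit Mpp.det := (Matrix.isUnit_iff_isUnit_det Mpp).mp hUnit
  have hmulinv : Mpp * Mpp⁻¹ = 1 := Matrix.mul_nonsing_inv Mpp hdet
  have hinvmul : Mpp⁻¹ * Mpp = 1 := Matrix.nonsing_inv_mul Mpp hdet
  have hinvnn : ∀ a c, 0 ≤ Mpp⁻¹ a c := by
    intro a c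
    refine zmat_nonneg_sol Mpp yp hyppos hMppZ hMppX (fun r => Mpp⁻¹ r c) ?_ a
    intro i
    have hcol : (Mpp *ᵥ fun r => Mpp⁻¹ r c) i = (Mpp * Mpp⁻¹) i c := by
      simp [Matrix.mulVec, dotProduct, Matrix.mul_apply]
    rw [hcol, hmulinv, Matrix.one_apply]
    split <;> norm_num
  set vv : {i // 0 < b i} → ℝ := fun i => wP i - ε' * bPlus b i with hvvdef
  have hvvpos : ∀ i, 0 < vv i := by
    intro i
    have ha := hwPlb i
    have hbi := i.2
    simp only [hvvdef, bPlus]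
    nlinarith
  set p : {i // 0 < b i} → ℝ := Mpp⁻¹ *ᵥ vv with hpdef
  have hppos : ∀ i, 0 < p i := by
    refine zmat_pos_sol Mpp yp hyppos hMppZ hMppX p ?_
    intro i
    rw [hpdef, Matrix.mulVec_mulVec, hmulinv, Matrix.one_mulVec]
    exact hvvpos i
  have hstrict : ∀ i : {x // b x = 0}, ∃ k : {x // 0 < b x}, M0p i k < 0 := by
    intro i
    obtain ⟨g₀, hg₀P, hg₀ne⟩ := hI0 i.1 i.2
    let j₀ : Fin (m - 1) := ⟨0, hq0⟩
    refine ⟨⟨g₀ j₀, hg₀P j₀⟩, ?_⟩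
    have hik : i.1 ≠ g₀ j₀ := by
      intro h
      have h' := hg₀P j₀
      rw [← h, i.2] at h'
      exact lt_irrefl 0 h'
    have hAneg : A i.1 g₀ < 0 :=
      lt_of_le_of_ne (hzA i.1 g₀ fun hall => hik (hall j₀).symm) hg₀ne
    rw [hM0pdef]
    show Mq i.1 (g₀ j₀) < 0
    rw [hJ]
    exact jent_neg hq A hzA y hypos hik g₀ j₀ hAneg rfl
  -- apply the Z-matrix criterion to the Schur complement
  refine zmat_isNonsingularM _ y0 hy0pos ?_ ?_
  · intro i j hij
    have htp : 0 ≤ (M0p * Mpp⁻¹ * Mp0) i j := by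
      rw [Matrix.mul_apply]
      refine Finset.sum_nonneg fun c _ => ?_
      have h8 : (M0p * Mpp⁻¹) i c ≤ 0 := by
        rw [Matrix.mul_apply]
        exact Finset.sum_nonpos fun a _ =>
          mul_nonpos_of_nonpos_of_nonneg (hM0pneg i a) (hinvnn a c)
      nlinarith [hMp0neg c j]
    have h9 := hM00neg i j hij
    simp only [Matrix.sub_apply]
    linarith
  · intro i
    have hu : Mp0 *ᵥ y0 = wP - Mpp *ᵥ yp := by
      funext k
      have := hEulerP k
      simp only [Pi.sub_apply]
      linarith
    have hSy : ((M00 - M0p * Mpp⁻¹ * Mp0) *ᵥ y0) i =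
        tApp A (cPow y (1 / ((m - 1 : ℕ) : ℝ))) i.1 - (M0p *ᵥ (Mpp⁻¹ *ᵥ wP)) i := by
      rw [Matrix.sub_mulVec]
      have h10 : (M0p * Mpp⁻¹ * Mp0) *ᵥ y0 = M0p *ᵥ (Mpp⁻¹ *ᵥ (Mp0 *ᵥ y0)) := by
        rw [Matrix.mulVec_mulVec, Matrix.mulVec_mulVec]
      rw [h10, hu, Matrix.mulVec_sub, Matrix.mulVec_mulVec, hinvmul, Matrix.one_mulVec,
        Matrix.mulVec_sub]
      have h11 := hEuler0 i
      simp only [Pi.sub_apply]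
      linarith
    rw [hSy]
    have hFB2i := hFB2 i
    have hkey : (M0p *ᵥ (Mpp⁻¹ *ᵥ wP)) i - ε' * (M0p *ᵥ (Mpp⁻¹ *ᵥ bPlus b)) i
        = (M0p *ᵥ p) i := by
      have hvv : vv = wP - ε' • bPlus b := by
        funext k
        simp [hvvdef, Pi.sub_apply, Pi.smul_apply, smul_eq_mul]
      rw [hpdef, hvv, Matrix.mulVec_sub, Matrix.mulVec_smul, Matrix.mulVec_sub,
        Matrix.mulVec_smul]
      simp [Pi.sub_apply, Pi.smul_apply, smul_eq_mul]
    have hMp : (M0p *ᵥ p) i < 0 := by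
      obtain ⟨k₀, hk₀⟩ := hstrict i
      have hterm : M0p i k₀ * p k₀ < 0 := mul_neg_of_neg_of_pos hk₀ (hppos k₀)
      have hle : ∀ a ∈ (Finset.univ : Finset {x // 0 < b x}),
          M0p i a * p a ≤ (fun _ => (0:ℝ)) a := fun a _ =>
        mul_nonpos_of_nonpos_of_nonneg (hM0pneg i a) (hppos a).le
      have hlt := Finset.sum_lt_sum hle ⟨k₀, Finset.mem_univ k₀, hterm⟩
      simpa [Matrix.mulVec, dotProduct] using hlt
    linarith
end
end

section
/- Let m ≥ 3, let A be a semi-symmetric strong M-tensor of order m and dimension n, let b ∈ ℝⁿ with b ≥ 0, I₊ = {i : b_i > 0} nonempty, and I₀ = {i : b_i = 0}. Let 0 < ε′ < ε ≤ 1. If x* ∈ ℝⁿ satisfies x* > 0 componentwise and A (x*)^{m−1} = b, then y* := (x*)^{[m−1]} belongs to F̄_{ε,ε′}; that is, (A((y*)^{[1/(m−1)]})^{m−1})_i ≥ ε b_i for all i ∈ I₊, the submatrix f'(y*)_{I₊I₊} is invertible, and (A((y*)^{[1/(m−1)]})^{m−1})_{I₀} ≥ ε′ · f'(y*)_{I₀I₊}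 f'(y*)_{I₊I₊}^{−1} b_{I₊} componentwise. -/
open Finset Matrix Filter Topology

noncomputable section

-- ===== auxiliary lemmas =====

lemma base_deriv {n q : ℕ} (y : Fin n → ℝ) (hy : ∀ i, 0 < y i) (l : Fin n) :
    HasFDerivAt (fun z : Fin n → ℝ => z l ^ (1/(q:ℝ)))
      (((1/(q:ℝ)) * y l ^ ((1/(q:ℝ))-1)) • ContinuousLinearMap.proj (R := ℝ) (φ := fun _ : Fin n => ℝ) l) y := by
  have h1 : HasDerivAt (fun t : ℝ => t ^ (1/(q:ℝ))) ((1/(q:ℝ)) * (y l) ^ ((1/(q:ℝ))-1)) (y l) :=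
    Real.hasDerivAt_rpow_const (Or.inl (hy l).ne')
  exact h1.comp_hasFDerivAt y
    ((ContinuousLinearMap.proj (R := ℝ) (φ := fun _ : Fin n => ℝ) l).hasFDerivAt)

lemma jacM_fres {n q : ℕ} (A : Fin n → (Fin q → Fin n) → ℝ) (b : Fin n → ℝ)
    (y : Fin n → ℝ) (hy : ∀ i, 0 < y i) (i k : Fin n) :
    jacM (fres A b) y i k =
      ∑ g : Fin q → Fin n, A i g *
        ∑ j : Fin q, (∏ j' ∈ Finset.univ.erase j, (y (g j')) ^ (1/(q:ℝ))) *
          ((1/(q:ℝ)) * (y (g j)) ^ ((1/(q:ℝ))-1) * Pi.single (M := fun _ : Fin n => ℝ) k 1 (g j)) := by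
  have hF : HasFDerivAt (fun z => fres A b z i)
      (∑ g : Fin q → Fin n, A i g •
        ∑ j : Fin q, (∏ j' ∈ Finset.univ.erase j, (y (g j')) ^ (1/(q:ℝ))) •
          (((1/(q:ℝ)) * (y (g j)) ^ ((1/(q:ℝ))-1)) •
            ContinuousLinearMap.proj (R := ℝ) (φ := fun _ : Fin n => ℝ) (g j))) y := by
    have hsum : HasFDerivAt
        (fun z : Fin n → ℝ => ∑ g : Fin q → Fin n, A i g * ∏ j, (z (g j)) ^ (1/(q:ℝ)))
        (∑ g : Fin q → Fin n, A i g •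
          ∑ j : Fin q, (∏ j' ∈ Finset.univ.erase j, (y (g j')) ^ (1/(q:ℝ))) •
            (((1/(q:ℝ)) * (y (g j)) ^ ((1/(q:ℝ))-1)) •
              ContinuousLinearMap.proj (R := ℝ) (φ := fun _ : Fin n => ℝ) (g j))) y := by
      apply HasFDerivAt.fun_sum
      intro g _
      exact (HasFDerivAt.finset_prod (fun j _ => base_deriv y hy (g j))).const_mul (A i g)
    exact hsum.sub_const (b i)
  have hfd := hF.fderiv
  simp only [jacM, fres, tApp, cPow] at hfd ⊢
  rw [hfd]
  simp only [ContinuousLinearMap.sum_apply, ContinuousLinearMap.smul_apply,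
    ContinuousLinearMap.proj_apply, smul_eq_mul]

/-- A Z-matrix which maps some positive vector to a positive vector maps
nonnegative-preimage vectors to nonnegative vectors. -/
lemma zmat_nonneg {k : Type} [Fintype k] [DecidableEq k] (M : Matrix k k ℝ)
    (hZ : ∀ i j, i ≠ j → M i j ≤ 0) (u : k → ℝ) (hu : ∀ i, 0 < u i)
    (hMu : ∀ i, 0 < (M *ᵥ u) i) (v : k → ℝ) (hv : ∀ i, 0 ≤ (M *ᵥ v) i) :
    ∀ i, 0 ≤ v i := by
  intro i
  obtain ⟨i₀, -, hmin⟩ := Finset.exists_min_image Finset.univ (fun j => v j / u j)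
    ⟨i, Finset.mem_univ i⟩
  set t := v i₀ / u i₀ with ht
  have hge : ∀ j, t * u j ≤ v j := by
    intro j
    have h1 : t ≤ v j / u j := hmin j (Finset.mem_univ j)
    have h2 := mul_le_mul_of_nonneg_right h1 (hu j).le
    rwa [div_mul_cancel₀ _ (hu j).ne'] at h2
  have htn : 0 ≤ t := by
    by_contra hlt
    push_neg at hlt
    have key : (M *ᵥ (v - t • u)) i₀ ≤ 0 := by
      have he : (M *ᵥ (v - t • u)) i₀ = ∑ j, M i₀ j * (v j - t * u j) := by
        simp [Matrix.mulVec, dotProduct, Pi.sub_apply, Pi.smul_apply, smul_eq_mul, mul_sub]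
      rw [he]
      apply Finset.sum_nonpos
      intro j _
      rcases eq_or_ne j i₀ with rfl | hne
      · have hz : v j - t * u j = 0 := by
          rw [ht, div_mul_cancel₀ _ (hu j).ne', sub_self]
        rw [hz, mul_zero]
      · exact mul_nonpos_iff.mpr (Or.inr ⟨hZ i₀ j hne.symm, by linarith [hge j]⟩)
    rw [Matrix.mulVec_sub, Matrix.mulVec_smul] at key
    have h3 := hv i₀
    have h4 : (M *ᵥ v) i₀ - t * (M *ᵥ u) i₀ ≤ 0 := by
      simpa [Pi.sub_apply, Pi.smul_apply, smul_eq_mul] using key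
    nlinarith [hMu i₀]
  nlinarith [hge i, hu i]

theorem positive_solution_mem_FBar {m n : ℕ} (hm : 3 ≤ m)
    (A : Fin n → (Fin (m - 1) → Fin n) → ℝ)
    (hsym : IsSemiSymmetric A) (hM : IsStrongMTensor A)
    (b : Fin n → ℝ) (hb : ∀ i, 0 ≤ b i) (hbp : ∃ i, 0 < b i)
    (ε ε' : ℝ) (h1 : 0 < ε') (h2 : ε' < ε) (h3 : ε ≤ 1)
    (xstar : Fin n → ℝ) (hx1 : ∀ i, 0 < xstar i) (hx2 : ∀ i, tApp A xstar i = b i) :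
    cPow xstar ((m - 1 : ℕ) : ℝ) ∈ FBar A b ε ε' := by
  have hq0 : ((m - 1 : ℕ) : ℝ) ≠ 0 := Nat.cast_ne_zero.mpr (by omega)
  set p : ℝ := 1 / ((m - 1 : ℕ) : ℝ) with hp
  set y : Fin n → ℝ := cPow xstar ((m - 1 : ℕ) : ℝ) with hydef
  have hy : ∀ i, 0 < y i := fun i => Real.rpow_pos_of_pos (hx1 i) _
  have hL1 : cPow y p = xstar := by
    funext i
    show (xstar i ^ ((m - 1 : ℕ) : ℝ)) ^ p = xstar i
    rw [hp, ← Real.rpow_mul (hx1 i).le, mul_one_div_cancel hq0, Real.rpow_one]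
  have hTy : ∀ i, tApp A (cPow y p) i = b i := by
    intro i; rw [hL1]; exact hx2 i
  obtain ⟨s, B, hB, hAB, -⟩ := hM
  have hZt : ∀ i g, ¬(∀ j, g j = i) → A i g ≤ 0 := by
    intro i g hg
    rw [hAB i g]
    simp only [identT, if_neg hg]
    have := hB i g
    linarith
  have hsingle : ∀ (kk a : Fin n), (0:ℝ) ≤ Pi.single (M := fun _ : Fin n => ℝ) kk 1 a := by
    intro kk a
    rcases eq_or_ne a kk with rfl | h
    · simp
    · simp [Pi.single_eq_of_ne h]
  have hterm_nonneg : ∀ (kk : Fin n) (g : Fin (m-1) → Fin n) (j : Fin (m-1)),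
      0 ≤ (∏ j' ∈ Finset.univ.erase j, (y (g j')) ^ p) *
        ((1/((m - 1 : ℕ):ℝ)) * (y (g j)) ^ (p-1) * Pi.single (M := fun _ : Fin n => ℝ) kk 1 (g j)) := by
    intro kk g j
    apply mul_nonneg
    · exact Finset.prod_nonneg fun _ _ => (Real.rpow_pos_of_pos (hy _) _).le
    · exact mul_nonneg (mul_nonneg (by positivity) (Real.rpow_pos_of_pos (hy _) _).le)
        (hsingle kk _)
  have hoff : ∀ i k : Fin n, i ≠ k → jacM (fres A b) y i k ≤ 0 := by
    intro i k hik
    rw [jacM_fres A b y hy i k]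
    apply Finset.sum_nonpos
    intro g _
    by_cases hc : ∃ j, g j = k
    · refine mul_nonpos_iff.mpr (Or.inr ⟨hZt i g ?_, Finset.sum_nonneg fun j _ => hterm_nonneg k g j⟩)
      intro hall
      obtain ⟨j, hj⟩ := hc
      exact hik ((hall j).symm.trans hj)
    · push_neg at hc
      have hz : (∑ j : Fin (m-1), (∏ j' ∈ Finset.univ.erase j, (y (g j')) ^ p) *
          ((1/((m - 1 : ℕ):ℝ)) * (y (g j)) ^ (p-1) * Pi.single (M := fun _ : Fin n => ℝ) k 1 (g j))) = 0 :=
        Finset.sum_eq_zero fun j _ => by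
          rw [Pi.single_eq_of_ne (hc j), mul_zero, mul_zero]
      rw [hz, mul_zero]
  have hm1 : (m:ℝ) - 1 ≠ 0 := by
    have hc : ((m - 1 : ℕ):ℝ) = (m:ℝ) - 1 := by
      rw [Nat.cast_sub (by omega : 1 ≤ m)]; norm_num
    rwa [hc] at hq0
  have hpow : ∀ a : Fin n, (y a) ^ (p-1) * y a = (y a) ^ p := by
    intro a
    nth_rewrite 2 [← Real.rpow_one (y a)]
    rw [← Real.rpow_add (hy a)]
    ring_nf
  have hrow : ∀ i, ∑ kk, jacM (fres A b) y i kk * y kk = b i := by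
    intro i
    have expand : ∀ kk, jacM (fres A b) y i kk * y kk
        = ∑ g : Fin (m-1) → Fin n, ∑ j : Fin (m-1), A i g *
            ((∏ j' ∈ Finset.univ.erase j, (y (g j')) ^ p) *
              ((1/((m - 1 : ℕ):ℝ)) * (y (g j)) ^ (p-1) *
                Pi.single (M := fun _ : Fin n => ℝ) kk 1 (g j)) * y kk) := by
      intro kk
      rw [jacM_fres A b y hy i kk, Finset.sum_mul]
      simp only [← hp]
      refine Finset.sum_congr rfl fun g _ => ?_
      rw [Finset.mul_sum, Finset.sum_mul]
      exact Finset.sum_congr rfl fun j _ => by ring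
    have collapse : ∀ (g : Fin (m-1) → Fin n) (j : Fin (m-1)),
        (∑ kk, A i g * ((∏ j' ∈ Finset.univ.erase j, (y (g j')) ^ p) *
          ((1/((m - 1 : ℕ):ℝ)) * (y (g j)) ^ (p-1) *
            Pi.single (M := fun _ : Fin n => ℝ) kk 1 (g j)) * y kk))
        = A i g * ((1/((m - 1 : ℕ):ℝ)) * ∏ j', (y (g j')) ^ p) := by
      intro g j
      have hterm : ∀ kk, A i g * ((∏ j' ∈ Finset.univ.erase j, (y (g j')) ^ p) *
          ((1/((m - 1 : ℕ):ℝ)) * (y (g j)) ^ (p-1) *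
            Pi.single (M := fun _ : Fin n => ℝ) kk 1 (g j)) * y kk)
          = if g j = kk then A i g * ((1/((m - 1 : ℕ):ℝ)) * ∏ j', (y (g j')) ^ p) else 0 := by
        intro kk
        rcases eq_or_ne (g j) kk with he | hne
        · rw [if_pos he, ← he, Pi.single_eq_same]
          calc A i g * ((∏ j' ∈ Finset.univ.erase j, (y (g j')) ^ p) *
                ((1/((m - 1 : ℕ):ℝ)) * (y (g j)) ^ (p-1) * 1) * y (g j))
              = A i g * ((1/((m - 1 : ℕ):ℝ)) *
                  ((∏ j' ∈ Finset.univ.erase j, (y (g j')) ^ p) * ((y (g j)) ^ (p-1) * y (g j)))) := by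
                ring
            _ = A i g * ((1/((m - 1 : ℕ):ℝ)) *
                  ((∏ j' ∈ Finset.univ.erase j, (y (g j')) ^ p) * (y (g j)) ^ p)) := by
                rw [hpow]
            _ = A i g * ((1/((m - 1 : ℕ):ℝ)) * ∏ j', (y (g j')) ^ p) := by
                rw [Finset.prod_erase_mul _ _ (Finset.mem_univ j)]
        · rw [if_neg hne, Pi.single_eq_of_ne hne, mul_zero, mul_zero, zero_mul, mul_zero]
      rw [Finset.sum_congr rfl fun kk _ => hterm kk, Finset.sum_ite_eq]
      simp
    have hrowg : ∀ g : Fin (m-1) → Fin n,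
        (∑ _j : Fin (m-1), A i g * ((1/((m - 1 : ℕ):ℝ)) * ∏ j', (y (g j')) ^ p))
        = A i g * ∏ j', (y (g j')) ^ p := by
      intro g
      rw [Finset.sum_const, Finset.card_univ, Fintype.card_fin, nsmul_eq_mul]
      field_simp
    calc ∑ kk, jacM (fres A b) y i kk * y kk
        = ∑ kk, ∑ g : Fin (m-1) → Fin n, ∑ j : Fin (m-1), A i g *
            ((∏ j' ∈ Finset.univ.erase j, (y (g j')) ^ p) *
              ((1/((m - 1 : ℕ):ℝ)) * (y (g j)) ^ (p-1) *
                Pi.single (M := fun _ : Fin n => ℝ) kk 1 (g j)) * y kk) :=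
          Finset.sum_congr rfl fun kk _ => expand kk
      _ = ∑ g : Fin (m-1) → Fin n, ∑ kk, ∑ j : Fin (m-1), A i g *
            ((∏ j' ∈ Finset.univ.erase j, (y (g j')) ^ p) *
              ((1/((m - 1 : ℕ):ℝ)) * (y (g j)) ^ (p-1) *
                Pi.single (M := fun _ : Fin n => ℝ) kk 1 (g j)) * y kk) := Finset.sum_comm
      _ = ∑ g : Fin (m-1) → Fin n, ∑ j : Fin (m-1), ∑ kk, A i g *
            ((∏ j' ∈ Finset.univ.erase j, (y (g j')) ^ p) *
              ((1/((m - 1 : ℕ):ℝ)) * (y (g j)) ^ (p-1) *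
                Pi.single (M := fun _ : Fin n => ℝ) kk 1 (g j)) * y kk) :=
          Finset.sum_congr rfl fun g _ => Finset.sum_comm
      _ = ∑ g : Fin (m-1) → Fin n, ∑ _j : Fin (m-1), A i g *
            ((1/((m - 1 : ℕ):ℝ)) * ∏ j', (y (g j')) ^ p) :=
          Finset.sum_congr rfl fun g _ => Finset.sum_congr rfl fun j _ => collapse g j
      _ = ∑ g : Fin (m-1) → Fin n, A i g * ∏ j', (y (g j')) ^ p :=
          Finset.sum_congr rfl fun g _ => hrowg g
      _ = tApp A xstar i := by
          refine Finset.sum_congr rfl fun g _ => ?_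
          congr 1
          refine Finset.prod_congr rfl fun j _ => ?_
          have := congrFun hL1 (g j)
          simpa [cPow] using this
      _ = b i := hx2 i
  -- the principal submatrix on I₊
  set M' := subMat (jacM (fres A b) y) (fun i => 0 < b i) (fun i => 0 < b i) with hM'
  have hZ' : ∀ i j : {i // 0 < b i}, i ≠ j → M' i j ≤ 0 :=
    fun i j hij => hoff i.1 j.1 fun h => hij (Subtype.ext h)
  have hu' : ∀ j : {i // 0 < b i}, 0 < y j.1 := fun j => hy j.1
  have hMu : ∀ ipp : {i // 0 < b i},
      0 < (M' *ᵥ fun j : {i // 0 < b i} => y j.1) ipp := by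
    intro ipp
    have hsplit := Fintype.sum_subtype_add_sum_subtype (fun i => 0 < b i)
      (fun j => jacM (fres A b) y ipp.1 j * y j)
    have hneg : (∑ jp : {j // ¬ 0 < b j}, jacM (fres A b) y ipp.1 jp.1 * y jp.1) ≤ 0 := by
      apply Finset.sum_nonpos
      intro jp _
      have hne : ipp.1 ≠ jp.1 := fun h => jp.2 (h ▸ ipp.2)
      exact mul_nonpos_iff.mpr (Or.inr ⟨hoff _ _ hne, (hy _).le⟩)
    have heq : (M' *ᵥ fun j : {i // 0 < b i} => y j.1) ipp
        = ∑ jp : {j // 0 < b j}, jacM (fres A b) y ipp.1 jp.1 * y jp.1 := by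
      simp [hM', Matrix.mulVec, dotProduct, subMat]
    rw [heq]
    have htot := hsplit.trans (hrow ipp.1)
    have := ipp.2
    linarith
  have hnn := fun v hv => zmat_nonneg M' hZ' _ hu' hMu v hv
  have hUnit : IsUnit M' := by
    rw [← Matrix.mulVec_injective_iff_isUnit]
    intro v w hvw
    have hd1 : M' *ᵥ (v - w) = 0 := by rw [Matrix.mulVec_sub, hvw, sub_self]
    have hd2 : M' *ᵥ (w - v) = 0 := by rw [Matrix.mulVec_sub, hvw, sub_self]
    have h1' := hnn (v - w) (by rw [hd1]; intro i; exact le_refl 0)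
    have h2' := hnn (w - v) (by rw [hd2]; intro i; exact le_refl 0)
    funext i
    have := h1' i
    have := h2' i
    simp only [Pi.sub_apply] at *
    linarith
  have hinv : M' *ᵥ (M'⁻¹ *ᵥ bPlus b) = bPlus b := by
    rw [Matrix.mulVec_mulVec, Matrix.mul_nonsing_inv _ ((Matrix.isUnit_iff_isUnit_det M').mp hUnit),
      Matrix.one_mulVec]
  have hvnn : ∀ jp, 0 ≤ (M'⁻¹ *ᵥ bPlus b) jp := by
    apply hnn
    rw [hinv]
    intro jp
    exact (jp.2).le
  refine ⟨⟨hy, fun i hbi => ?_⟩, hy, hUnit, fun iq => ?_⟩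
  · rw [hTy i]
    nlinarith
  · have hle : (subMat (jacM (fres A b) y) (fun i => b i = 0) (fun i => 0 < b i) *ᵥ
        (M'⁻¹ *ᵥ bPlus b)) iq ≤ 0 := by
      have heq : (subMat (jacM (fres A b) y) (fun i => b i = 0) (fun i => 0 < b i) *ᵥ
          (M'⁻¹ *ᵥ bPlus b)) iq
          = ∑ jp : {j // 0 < b j}, jacM (fres A b) y iq.1 jp.1 * (M'⁻¹ *ᵥ bPlus b) jp := by
        simp [Matrix.mulVec, dotProduct, subMat]
      rw [heq]
      apply Finset.sum_nonpos
      intro jp _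
      have hne : iq.1 ≠ jp.1 := fun h => by
        have := jp.2; rw [← h, iq.2] at this; exact lt_irrefl 0 this
      exact mul_nonpos_iff.mpr (Or.inr ⟨hoff _ _ hne, hvnn jp⟩)
    have hR : tApp A (cPow y (1 / ((m - 1 : ℕ) : ℝ))) iq.1 = 0 := by
      rw [← hp, hTy iq.1, iq.2]
    rw [hR]
    exact mul_nonpos_iff.mpr (Or.inl ⟨h1.le, hle⟩)
end
end
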